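/- For every n ≥ 1 and every R > 0 there exists a constant C > 0 such that for every ε > 0 and every smooth function u on ℝ^{2n+1} with compact support contained in the Euclidean ball of radius R centered at the origin, one has n ∫_{ℝ^{2n+1}} |∇^H u|² dg ≤ C((1 + 1/ε) ∫_{ℝ^{2n+1}} (Δ_H u)² dg + ε ∫_{ℝ^{2n+1}} (Tu)² dg), where dg denotes Lebesgue measure. -/

import Mathlib

open scoped BigOperators
noncomputable section

/-- The Heisenberg group ℍⁿ identified with ℝⁿ × ℝⁿ × ℝ, with coordinates (x, y, t). -/
abbrev Heis (n : ℕ) : Type := (Fin n → ℝ) × (Fin n → ℝ) × ℝ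

/-- The left-invariant horizontal vector fields `X_1, …, X_{2n}` acting on functions:
`X_j u = ∂u/∂x_j − (y_j/2) ∂u/∂t` for `j = 1,…,n` (indices `0,…,n-1` here) and
`X_{n+j} u = ∂u/∂y_j + (x_j/2) ∂u/∂t` (indices `n,…,2n-1`). -/
noncomputable def Xf (n : ℕ) (i : Fin (2 * n)) (u : Heis n → ℝ) (p : Heis n) : ℝ :=
  if h : (i : ℕ) < n then
    fderiv ℝ u p (Pi.single ⟨(i : ℕ), h⟩ 1, 0, 0)
      - p.2.1 ⟨(i : ℕ), h⟩ / 2 * fderiv ℝ u p (0, 0, 1)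
  else
    fderiv ℝ u p (0, Pi.single ⟨(i : ℕ) - n, by have := i.isLt; omega⟩ 1, 0)
      + p.1 ⟨(i : ℕ) - n, by have := i.isLt; omega⟩ / 2 * fderiv ℝ u p (0, 0, 1)

/-- The vertical vector field `T u = ∂u/∂t`. -/
noncomputable def Tf (n : ℕ) (u : Heis n → ℝ) (p : Heis n) : ℝ :=
  fderiv ℝ u p (0, 0, 1)

/-- The horizontal Laplacian `Δ_H u = Σ_{i=1}^{2n} X_i (X_i u)`. -/
noncomputable def ΔH (n : ℕ) (u : Heis n → ℝ) (p : Heis n) : ℝ :=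
  ∑ i : Fin (2 * n), Xf n i (Xf n i u) p

namespace HeisAux

open MeasureTheory

instance instHaar2 (n : ℕ) : ((volume : Measure ((Fin n → ℝ) × ℝ))).IsAddHaarMeasure :=
  Measure.prod.instIsAddHaarMeasure _ _
instance instHaar (n : ℕ) : (volume : Measure (Heis n)).IsAddHaarMeasure :=
  Measure.prod.instIsAddHaarMeasure _ _

variable {n : ℕ}

/-- x-coordinate projection as CLM -/
def ℓX (j : Fin n) : Heis n →L[ℝ] ℝ :=
  (ContinuousLinearMap.proj j).comp (ContinuousLinearMap.fst ℝ (Fin n → ℝ) ((Fin n → ℝ) × ℝ))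
def ℓY (j : Fin n) : Heis n →L[ℝ] ℝ :=
  ((ContinuousLinearMap.proj j).comp (ContinuousLinearMap.fst ℝ (Fin n → ℝ) ℝ)).comp
    (ContinuousLinearMap.snd ℝ (Fin n → ℝ) ((Fin n → ℝ) × ℝ))
def ℓT : Heis n →L[ℝ] ℝ :=
  ((ContinuousLinearMap.snd ℝ (Fin n → ℝ) ℝ)).comp
    (ContinuousLinearMap.snd ℝ (Fin n → ℝ) ((Fin n → ℝ) × ℝ))

@[simp] lemma ℓX_apply (j : Fin n) (p : Heis n) : ℓX j p = p.1 j := rfl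
@[simp] lemma ℓY_apply (j : Fin n) (p : Heis n) : ℓY j p = p.2.1 j := rfl
@[simp] lemma ℓT_apply (p : Heis n) : ℓT p = p.2.2 := rfl

lemma smooth_D {u : Heis n → ℝ} (hu : ContDiff ℝ (⊤:ℕ∞) u) (v : Heis n) :
    ContDiff ℝ (⊤:ℕ∞) (fun p => fderiv ℝ u p v) :=
  (hu.fderiv_right (by simp)).clm_apply contDiff_const

lemma hcs_D {u : Heis n → ℝ} (hc : HasCompactSupport u) (v : Heis n) :
    HasCompactSupport (fun p => fderiv ℝ u p v) :=
  hc.fderiv_apply (𝕜 := ℝ) v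

lemma smooth_Xf {u : Heis n → ℝ} (hu : ContDiff ℝ (⊤:ℕ∞) u) (i : Fin (2 * n)) :
    ContDiff ℝ (⊤:ℕ∞) (Xf n i u) := by
  unfold Xf
  split
  · exact (smooth_D hu _).sub (((ℓY _).contDiff.div_const 2).mul (smooth_D hu _))
  · exact (smooth_D hu _).add (((ℓX _).contDiff.div_const 2).mul (smooth_D hu _))

lemma hcs_sub {f g : Heis n → ℝ} (hf : HasCompactSupport f) (hg : HasCompactSupport g) :
    HasCompactSupport (fun p => f p - g p) := by
  exact hf.sub hg

lemma hcs_Xf {u : Heis n → ℝ} (hc : HasCompactSupport u) (i : Fin (2 * n)) :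
    HasCompactSupport (Xf n i u) := by
  unfold Xf
  split
  · exact hcs_sub (hcs_D hc _) ((hcs_D hc _).mul_left)
  · exact (hcs_D hc _).add ((hcs_D hc _).mul_left)

lemma integ {f : Heis n → ℝ} (hf : Continuous f) (h : HasCompactSupport f) :
    Integrable f := hf.integrable_of_hasCompactSupport h

/-- ∫ ∂_v F = 0 for smooth compactly supported F. -/
lemma integral_D_eq_zero {F : Heis n → ℝ} (hF : ContDiff ℝ (⊤:ℕ∞) F)
    (hc : HasCompactSupport F) (v : Heis n) :
    ∫ p : Heis n, fderiv ℝ F p v = 0 := by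
  have h := integral_mul_fderiv_eq_neg_fderiv_mul_of_integrable
    (μ := (volume : Measure (Heis n))) (f := fun _ : Heis n => (1:ℝ)) (g := F) (v := v)
    ?_ ?_ ?_ (fun x _ => differentiableAt_const 1) (fun x _ => hF.differentiable (by simp) x)
  · simpa [fderiv_fun_const] using h
  · simp [fderiv_fun_const]
  · simpa using integ ((smooth_D hF v).continuous) (hcs_D hc v)
  · simpa using integ hF.continuous hc

/-- ∫ ℓ(p) ∂_v F = -ℓ(v) ∫ F for a linear weight ℓ. -/
lemma integral_linear_mul_D {F : Heis n → ℝ} (hF : ContDiff ℝ (⊤:ℕ∞) F)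
    (hc : HasCompactSupport F) (ℓ : Heis n →L[ℝ] ℝ) (v : Heis n) :
    ∫ p : Heis n, ℓ p * fderiv ℝ F p v = - (ℓ v * ∫ p : Heis n, F p) := by
  have h := integral_mul_fderiv_eq_neg_fderiv_mul_of_integrable
    (μ := (volume : Measure (Heis n))) (f := fun p : Heis n => ℓ p) (g := F) (v := v)
    ?_ ?_ ?_ (fun x _ => ℓ.differentiableAt) (fun x _ => hF.differentiable (by simp) x)
  · rw [h]
    have : ∀ p : Heis n, fderiv ℝ (fun q : Heis n => ℓ q) p v = ℓ v := by
      intro p; rw [ℓ.fderiv]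
    simp only [this]
    rw [integral_const_mul]
  · have : (fun p : Heis n => fderiv ℝ (fun q : Heis n => ℓ q) p v * F p)
        = fun p => ℓ v * F p := by
      funext p; rw [ℓ.fderiv]
    rw [this]
    exact (integ hF.continuous hc).const_mul _
  · exact integ (ℓ.continuous.mul ((smooth_D hF v).continuous))
      ((hcs_D hc v).mul_left)
  · exact integ (ℓ.continuous.mul hF.continuous) hc.mul_left

/-- key: ∫ (∂_v F + ℓ(p) ∂_t F) = 0 when ℓ(e_t) = 0. -/
lemma integral_D_add_linear {F : Heis n → ℝ} (hF : ContDiff ℝ (⊤:ℕ∞) F)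
    (hc : HasCompactSupport F) (v : Heis n) (ℓ : Heis n →L[ℝ] ℝ)
    (hv : ℓ ((0,0,1) : Heis n) = 0) :
    ∫ p : Heis n, (fderiv ℝ F p v + ℓ p * fderiv ℝ F p ((0,0,1) : Heis n)) = 0 := by
  have hA : Integrable (fun p : Heis n => fderiv ℝ F p v) :=
    integ ((smooth_D hF v).continuous) (hcs_D hc v)
  have hB : Integrable (fun p : Heis n => ℓ p * fderiv ℝ F p ((0,0,1) : Heis n)) :=
    integ (ℓ.continuous.mul ((smooth_D hF _).continuous)) ((hcs_D hc _).mul_left)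
  rw [integral_add hA hB, integral_linear_mul_D hF hc, integral_D_eq_zero hF hc, hv]
  ring

/-- ∫ X_i F = 0 for smooth compactly supported F. -/
lemma integral_Xf_eq_zero {F : Heis n → ℝ} (hF : ContDiff ℝ (⊤:ℕ∞) F)
    (hc : HasCompactSupport F) (i : Fin (2 * n)) :
    ∫ p : Heis n, Xf n i F p = 0 := by
  unfold Xf
  split
  case isTrue h =>
    have key := integral_D_add_linear hF hc (Pi.single ⟨(i:ℕ), h⟩ 1, 0, 0)
      ((-(2:ℝ)⁻¹) • ℓY ⟨(i:ℕ), h⟩) (by simp)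
    refine Eq.trans (integral_congr_ae ?_) key
    filter_upwards with p
    simp only [ContinuousLinearMap.smul_apply, ℓY_apply, smul_eq_mul]
    ring
  case isFalse h =>
    have key := integral_D_add_linear hF hc
      (0, Pi.single ⟨(i:ℕ) - n, by have := i.isLt; omega⟩ 1, 0)
      (((2:ℝ)⁻¹) • ℓX ⟨(i:ℕ) - n, by have := i.isLt; omega⟩) (by simp)
    refine Eq.trans (integral_congr_ae ?_) key
    filter_upwards with p
    simp only [ContinuousLinearMap.smul_apply, ℓX_apply, smul_eq_mul]
    ring

lemma hcs_sum {ι : Type*} (s : Finset ι) (f : ι → Heis n → ℝ)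
    (h : ∀ i ∈ s, HasCompactSupport (f i)) :
    HasCompactSupport (fun p => ∑ i ∈ s, f i p) := by
  classical
  induction s using Finset.induction with
  | empty => simpa using HasCompactSupport.intro isCompact_empty (fun x _ => rfl)
  | insert a s' hx ih =>
    have : (fun p => ∑ i ∈ insert a s', f i p)
        = fun p => f a p + ∑ i ∈ s', f i p := by
      funext p; rw [Finset.sum_insert hx]
    rw [this]
    exact (h a (Finset.mem_insert_self a s')).add
      (ih fun i hi => h i (Finset.mem_insert_of_mem hi))

lemma smooth_ΔH {u : Heis n → ℝ} (hu : ContDiff ℝ (⊤:ℕ∞) u) :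
    ContDiff ℝ (⊤:ℕ∞) (ΔH n u) := by
  have : ΔH n u = fun p => ∑ i : Fin (2*n), Xf n i (Xf n i u) p := rfl
  rw [this]
  exact ContDiff.sum fun i _ => smooth_Xf (smooth_Xf hu i) i

lemma hcs_ΔH {u : Heis n → ℝ} (hu : ContDiff ℝ (⊤:ℕ∞) u) (hc : HasCompactSupport u) :
    HasCompactSupport (ΔH n u) :=
  hcs_sum _ _ fun i _ => hcs_Xf (hcs_Xf hc i) i

/-- Product rule for the horizontal fields. -/
lemma Xf_mul {f g : Heis n → ℝ} (hf : ContDiff ℝ (⊤:ℕ∞) f) (hg : ContDiff ℝ (⊤:ℕ∞) g)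
    (i : Fin (2 * n)) (p : Heis n) :
    Xf n i (fun q => f q * g q) p = Xf n i f p * g p + f p * Xf n i g p := by
  have hdf : DifferentiableAt ℝ f p := (hf.differentiable (by simp)) p
  have hdg : DifferentiableAt ℝ g p := (hg.differentiable (by simp)) p
  have hm : ∀ v : Heis n, fderiv ℝ (fun q => f q * g q) p v
      = fderiv ℝ f p v * g p + f p * fderiv ℝ g p v := by
    intro v
    rw [fderiv_fun_mul hdf hdg]
    simp only [ContinuousLinearMap.add_apply, ContinuousLinearMap.smul_apply, smul_eq_mul]
    ring
  unfold Xf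
  split <;> (rw [hm, hm]; ring)

/-- Integration by parts for the horizontal fields. -/
lemma integral_Xf_mul {f g : Heis n → ℝ} (hf : ContDiff ℝ (⊤:ℕ∞) f)
    (hcf : HasCompactSupport f) (hg : ContDiff ℝ (⊤:ℕ∞) g) (hcg : HasCompactSupport g)
    (i : Fin (2 * n)) :
    ∫ p : Heis n, Xf n i f p * g p = - ∫ p : Heis n, f p * Xf n i g p := by
  have h0 : ∫ p : Heis n, Xf n i (fun q => f q * g q) p = 0 :=
    integral_Xf_eq_zero (hf.mul hg) (hcf.mul_right) i
  have h1 : Integrable (fun p : Heis n => Xf n i f p * g p) :=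
    integ ((smooth_Xf hf i).continuous.mul hg.continuous) ((hcs_Xf hcf i).mul_right)
  have h2 : Integrable (fun p : Heis n => f p * Xf n i g p) :=
    integ (hf.continuous.mul (smooth_Xf hg i).continuous) (hcf.mul_right)
  have h3 : ∫ p : Heis n, (Xf n i f p * g p + f p * Xf n i g p) = 0 := by
    refine Eq.trans (integral_congr_ae ?_) h0
    filter_upwards with p
    exact (Xf_mul hf hg i p).symm
  rw [integral_add h1 h2] at h3
  linarith

/-- Energy identity: ∫ |∇ᴴ u|² = - ∫ u Δᴴ u. -/
lemma energy_identity {u : Heis n → ℝ} (hu : ContDiff ℝ (⊤:ℕ∞) u)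
    (hc : HasCompactSupport u) :
    ∫ p : Heis n, ∑ i : Fin (2*n), (Xf n i u p)^2 = - ∫ p : Heis n, u p * ΔH n u p := by
  have hint : ∀ i : Fin (2*n), Integrable (fun p : Heis n => (Xf n i u p)^2) := fun i =>
    integ (((smooth_Xf hu i).continuous).pow 2) (by
      have h := (hcs_Xf hc i).mul_right (f' := Xf n i u)
      have : (fun p => (Xf n i u p)^2) = Xf n i u * Xf n i u := by
        funext p; simp [sq]
      rw [this]; exact h)
  have hint2 : ∀ i : Fin (2*n), Integrable (fun p : Heis n => u p * Xf n i (Xf n i u) p) :=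
    fun i => integ (hu.continuous.mul (smooth_Xf (smooth_Xf hu i) i).continuous) hc.mul_right
  rw [integral_finset_sum _ (fun i _ => hint i)]
  have h1 : ∀ i : Fin (2*n), ∫ p : Heis n, (Xf n i u p)^2
      = - ∫ p : Heis n, u p * Xf n i (Xf n i u) p := by
    intro i
    have := integral_Xf_mul hu hc (smooth_Xf hu i) (hcs_Xf hc i) i
    simpa [sq] using this
  calc ∑ i : Fin (2*n), ∫ p : Heis n, (Xf n i u p)^2
      = ∑ i : Fin (2*n), - ∫ p : Heis n, u p * Xf n i (Xf n i u) p := by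
        exact Finset.sum_congr rfl fun i _ => h1 i
    _ = - ∑ i : Fin (2*n), ∫ p : Heis n, u p * Xf n i (Xf n i u) p := by
        rw [Finset.sum_neg_distrib]
    _ = - ∫ p : Heis n, ∑ i : Fin (2*n), u p * Xf n i (Xf n i u) p := by
        rw [integral_finset_sum _ (fun i _ => hint2 i)]
    _ = - ∫ p : Heis n, u p * ΔH n u p := by
        congr 1
        refine integral_congr_ae ?_
        filter_upwards with p
        rw [ΔH, Finset.mul_sum]

/-- Poincaré inequality in the t-direction. -/
lemma poincare_t {u : Heis n → ℝ} (hu : ContDiff ℝ (⊤:ℕ∞) u) (hc : HasCompactSupport u)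
    {R : ℝ} (hR : 0 < R)
    (hsupp : ∀ p : Heis n,
      R ^ 2 < (∑ i : Fin n, (p.1 i) ^ 2) + (∑ i : Fin n, (p.2.1 i) ^ 2) + p.2.2 ^ 2 →
      u p = 0) :
    ∫ p : Heis n, (u p)^2 ≤ 4*R^2 * ∫ p : Heis n, (Tf n u p)^2 := by
  have hw : ContDiff ℝ (⊤:ℕ∞) (fun q : Heis n => u q * u q) := hu.mul hu
  have hcw : HasCompactSupport (fun q : Heis n => u q * u q) := hc.mul_right
  have key := integral_linear_mul_D hw hcw ℓT ((0,0,1) : Heis n)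
  have hℓT1 : (ℓT : Heis n →L[ℝ] ℝ) ((0,0,1) : Heis n) = 1 := rfl
  have hm : ∀ p : Heis n, fderiv ℝ (fun q : Heis n => u q * u q) p ((0,0,1) : Heis n)
      = 2 * u p * Tf n u p := by
    intro p
    have hd : DifferentiableAt ℝ u p := (hu.differentiable (by simp)) p
    rw [fderiv_fun_mul hd hd]
    simp only [ContinuousLinearMap.add_apply, ContinuousLinearMap.smul_apply, smul_eq_mul]
    rw [Tf]; ring
  -- derivative vanishes outside the ball
  have hcontS : Continuous (fun q : Heis n =>
      (∑ i : Fin n, (q.1 i) ^ 2) + (∑ i : Fin n, (q.2.1 i) ^ 2) + q.2.2 ^ 2) := by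
    apply Continuous.add
    apply Continuous.add
    · exact continuous_finset_sum _ fun i _ => ((continuous_apply i).comp continuous_fst).pow 2
    · exact continuous_finset_sum _ fun i _ =>
        ((continuous_apply i).comp (continuous_fst.comp continuous_snd)).pow 2
    · exact (continuous_snd.comp continuous_snd).pow 2
  have hD0 : ∀ p : Heis n,
      R ^ 2 < (∑ i : Fin n, (p.1 i) ^ 2) + (∑ i : Fin n, (p.2.1 i) ^ 2) + p.2.2 ^ 2 →
      fderiv ℝ u p = 0 := by
    intro p hp
    have hopen : IsOpen {q : Heis n |
        R ^ 2 < (∑ i : Fin n, (q.1 i) ^ 2) + (∑ i : Fin n, (q.2.1 i) ^ 2) + q.2.2 ^ 2} :=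
      isOpen_lt continuous_const hcontS
    have hev : u =ᶠ[nhds p] (fun _ => (0:ℝ)) := by
      filter_upwards [hopen.mem_nhds hp] with q hq using hsupp q hq
    rw [hev.fderiv_eq]
    exact fderiv_const_apply 0
  -- pointwise bound
  have hptw : ∀ p : Heis n, -(p.2.2 * (2 * u p * Tf n u p))
      ≤ (1/2)*(u p)^2 + 2*R^2*(Tf n u p)^2 := by
    intro p
    by_cases hp : p.2.2^2 ≤ R^2
    · nlinarith [sq_nonneg (u p + 2*(p.2.2)*(Tf n u p)),
        mul_nonneg (sub_nonneg.2 hp) (sq_nonneg (Tf n u p))]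
    · push_neg at hp
      have hS : R ^ 2 < (∑ i : Fin n, (p.1 i) ^ 2) + (∑ i : Fin n, (p.2.1 i) ^ 2)
          + p.2.2 ^ 2 := by
        have h1 : (0:ℝ) ≤ ∑ i : Fin n, (p.1 i) ^ 2 :=
          Finset.sum_nonneg fun i _ => sq_nonneg _
        have h2 : (0:ℝ) ≤ ∑ i : Fin n, (p.2.1 i) ^ 2 :=
          Finset.sum_nonneg fun i _ => sq_nonneg _
        linarith
      have hT : Tf n u p = 0 := by rw [Tf, hD0 p hS]; rfl
      have huz : u p = 0 := hsupp p hS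
      rw [hT, huz]
      norm_num
  -- integrability
  have hIu2 : Integrable (fun p : Heis n => (u p)^2) := by
    have : (fun p : Heis n => (u p)^2) = fun p => u p * u p := by funext p; ring
    rw [this]; exact integ (hu.continuous.mul hu.continuous) hc.mul_right
  have hIT2 : Integrable (fun p : Heis n => (Tf n u p)^2) := by
    have : (fun p : Heis n => (Tf n u p)^2) = fun p => Tf n u p * Tf n u p := by
      funext p; ring
    rw [this]
    exact integ ((smooth_D hu _).continuous.mul (smooth_D hu _).continuous)
      ((hcs_D hc ((0,0,1) : Heis n)).mul_right)
  have hIL : Integrable (fun p : Heis n => -(p.2.2 * (2 * u p * Tf n u p))) := by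
    refine Integrable.neg ?_
    exact integ ((ℓT : Heis n →L[ℝ] ℝ).continuous.mul
        ((continuous_const.mul hu.continuous).mul (smooth_D hu _).continuous))
      (((hcs_D hc ((0,0,1) : Heis n)).mul_left).mul_left)
  have hIR : Integrable (fun p : Heis n => (1/2)*(u p)^2 + 2*R^2*(Tf n u p)^2) :=
    (hIu2.const_mul _).add (hIT2.const_mul _)
  -- main identity : ∫ u² = ∫ -(t · 2u u_t)
  have hid : ∫ p : Heis n, (u p)^2 = ∫ p : Heis n, -(p.2.2 * (2 * u p * Tf n u p)) := by
    have e1 : ∫ p : Heis n, p.2.2 * (2 * u p * Tf n u p)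
        = ∫ p : Heis n, ℓT p * fderiv ℝ (fun q : Heis n => u q * u q) p ((0,0,1) : Heis n) := by
      refine integral_congr_ae ?_
      filter_upwards with p
      rw [hm p, ℓT_apply]
    have e2 : ∫ p : Heis n, (u p)^2 = ∫ p : Heis n, u p * u p := by
      refine integral_congr_ae ?_
      filter_upwards with p
      ring
    rw [integral_neg, e1, key, hℓT1, e2]
    ring
  rw [hid]
  have hmono : ∫ p : Heis n, -(p.2.2 * (2 * u p * Tf n u p))
      ≤ ∫ p : Heis n, ((1/2)*(u p)^2 + 2*R^2*(Tf n u p)^2) :=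
    integral_mono hIL hIR hptw
  rw [integral_add (hIu2.const_mul _) (hIT2.const_mul _), integral_const_mul,
    integral_const_mul] at hmono
  have := hid
  linarith

/-- Young-type inequality: `-(ab) ≤ c a² + d b²` when `4cd ≥ 1`. -/
lemma young_aux {a b c d : ℝ} (hc : 0 < c) (hcd : 1 ≤ 4*c*d) :
    -(a*b) ≤ c*a^2 + d*b^2 := by
  nlinarith [sq_nonneg (2*c*a + b), sq_nonneg b, hc.le,
    mul_nonneg (sub_nonneg.2 hcd) (sq_nonneg b)]

end HeisAux

open HeisAux MeasureTheory

set_option maxHeartbeats 1000000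

/-- For every n ≥ 1 and R > 0 there is C > 0 such that for all ε > 0 and all
u ∈ C_c^∞(ℝ^{2n+1}) supported in the Euclidean ball of radius R about the origin:
n ∫ |∇^H u|² ≤ C ((1 + 1/ε) ∫ (Δ_H u)² + ε ∫ (Tu)²). -/
theorem heisenberg_gradient_apriori_bound (n : ℕ) (hn : 1 ≤ n) (R : ℝ) (hR : 0 < R) :
    ∃ C : ℝ, 0 < C ∧ ∀ ε : ℝ, 0 < ε → ∀ u : Heis n → ℝ,
      ContDiff ℝ (⊤ : ℕ∞) u → HasCompactSupport u →
      (∀ p : Heis n,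
        R ^ 2 < (∑ i : Fin n, (p.1 i) ^ 2) + (∑ i : Fin n, (p.2.1 i) ^ 2) + p.2.2 ^ 2 →
        u p = 0) →
      (n : ℝ) * ∫ p : Heis n, ∑ i : Fin (2 * n), (Xf n i u p) ^ 2
        ≤ C * ((1 + 1 / ε) * (∫ p : Heis n, (ΔH n u p) ^ 2)
            + ε * ∫ p : Heis n, (Tf n u p) ^ 2) := by
  have hn' : (1:ℝ) ≤ (n:ℝ) := by exact_mod_cast hn
  refine ⟨(n:ℝ) * (2*R^2 + 1), by positivity, ?_⟩
  intro ε hε u hu hc hsupp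
  set C : ℝ := (n:ℝ) * (2*R^2 + 1) with hCdef
  set A : ℝ := ∫ p : Heis n, (ΔH n u p)^2 with hAdef
  set B : ℝ := ∫ p : Heis n, (Tf n u p)^2 with hBdef
  set I : ℝ := ∫ p : Heis n, ∑ i : Fin (2*n), (Xf n i u p)^2 with hIdef
  have hA0 : 0 ≤ A := integral_nonneg fun p => sq_nonneg _
  have hB0 : 0 ≤ B := integral_nonneg fun p => sq_nonneg _
  set c : ℝ := ε/(8*R^2) with hcdef
  set d : ℝ := 2*R^2/ε with hddef
  have hc0 : 0 < c := by positivity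
  have hd0 : 0 < d := by positivity
  have hcd : 1 ≤ 4*c*d := by
    rw [hcdef, hddef]
    have : 4*(ε/(8*R^2))*(2*R^2/ε) = 1 := by field_simp; ring
    linarith
  -- integrability
  have hIu2 : Integrable (fun p : Heis n => (u p)^2) := by
    have h : (fun p : Heis n => (u p)^2) = fun p => u p * u p := by funext p; ring
    rw [h]; exact integ (hu.continuous.mul hu.continuous) hc.mul_right
  have hIΔ2 : Integrable (fun p : Heis n => (ΔH n u p)^2) := by
    have h : (fun p : Heis n => (ΔH n u p)^2) = fun p => ΔH n u p * ΔH n u p := by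
      funext p; ring
    rw [h]
    exact integ ((smooth_ΔH hu).continuous.mul (smooth_ΔH hu).continuous)
      ((hcs_ΔH hu hc).mul_right)
  have hIuΔ : Integrable (fun p : Heis n => -(u p * ΔH n u p)) :=
    (integ (hu.continuous.mul (smooth_ΔH hu).continuous) hc.mul_right).neg
  -- energy + Young
  have henergy : I = - ∫ p : Heis n, u p * ΔH n u p := energy_identity hu hc
  have hyoung : ∀ p : Heis n, -(u p * ΔH n u p) ≤ c*(u p)^2 + d*(ΔH n u p)^2 :=
    fun p => young_aux hc0 hcd
  have step1 : I ≤ c * (∫ p : Heis n, (u p)^2) + d * A := by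
    rw [henergy, ← integral_neg]
    calc ∫ p : Heis n, -(u p * ΔH n u p)
        ≤ ∫ p : Heis n, (c*(u p)^2 + d*(ΔH n u p)^2) :=
          integral_mono hIuΔ ((hIu2.const_mul c).add (hIΔ2.const_mul d)) hyoung
      _ = c * (∫ p : Heis n, (u p)^2) + d * A := by
          rw [integral_add (hIu2.const_mul c) (hIΔ2.const_mul d),
            integral_const_mul, integral_const_mul]
  -- Poincaré
  have hpoin : ∫ p : Heis n, (u p)^2 ≤ 4*R^2 * B := poincare_t hu hc hR hsupp
  have step2 : I ≤ ε/2 * B + d * A := by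
    have h1 : c * (∫ p : Heis n, (u p)^2) ≤ c * (4*R^2 * B) :=
      mul_le_mul_of_nonneg_left hpoin hc0.le
    have h2 : c * (4*R^2 * B) = ε/2 * B := by
      rw [hcdef]; field_simp; ring
    linarith
  -- conclude
  have hεgoal : (n:ℝ) * I * ε ≤ C * ((1 + 1/ε) * A + ε * B) * ε := by
    have hIε : I * ε ≤ ε^2/2 * B + 2*R^2 * A := by
      have h := mul_le_mul_of_nonneg_right step2 hε.le
      have h2 : (ε/2 * B + d * A) * ε = ε^2/2 * B + (d*ε) * A := by ring
      have h3 : d * ε = 2*R^2 := by rw [hddef]; field_simp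
      rw [h2, h3] at h
      exact h
    have hnI : (n:ℝ) * I * ε ≤ (n:ℝ) * (ε^2/2 * B + 2*R^2 * A) := by
      have := mul_le_mul_of_nonneg_left hIε (Nat.cast_nonneg n : (0:ℝ) ≤ (n:ℝ))
      linarith [this]
    have hrhs : C * ((1 + 1/ε) * A + ε * B) * ε = C*(ε+1)*A + C*ε^2*B := by
      field_simp
    have hn0 : (0:ℝ) ≤ (n:ℝ) := Nat.cast_nonneg n
    have c1 : (n:ℝ) * (ε^2/2) ≤ C * ε^2 := by
      rw [hCdef]
      nlinarith [mul_nonneg (mul_nonneg hn0 (sq_nonneg R)) (sq_nonneg ε),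
        mul_nonneg hn0 (sq_nonneg ε)]
    have c2 : (n:ℝ) * (2*R^2) ≤ C * (ε+1) := by
      have hC1 : (n:ℝ) * (2*R^2) ≤ C := by rw [hCdef]; nlinarith [hn0]
      have hC0 : 0 < C := by rw [hCdef]; positivity
      nlinarith [mul_pos hC0 hε]
    have e1 : (n:ℝ) * (ε^2/2 * B + 2*R^2 * A)
        = ((n:ℝ) * (ε^2/2)) * B + ((n:ℝ) * (2*R^2)) * A := by ring
    have f1 : ((n:ℝ) * (ε^2/2)) * B ≤ (C * ε^2) * B :=
      mul_le_mul_of_nonneg_right c1 hB0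
    have f2 : ((n:ℝ) * (2*R^2)) * A ≤ (C * (ε+1)) * A :=
      mul_le_mul_of_nonneg_right c2 hA0
    rw [hrhs]
    rw [e1] at hnI
    linarith
  exact le_of_mul_le_mul_right hεgoal hε
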